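/- Let L be an even lattice with Gram matrix G (with respect to some basis) and let R be a subring of ℚ. Then all entries of G⁻¹ lie in R and all diagonal entries of G⁻¹ lie in 2R if and only if det(G) is invertible in R. -/

import Mathlib

open Matrix Finset

/-- A symmetric matrix with zero diagonal over `ZMod 2` has vanishing
associated quadratic form. -/
lemma quad_zero {n : ℕ} (A : Matrix (Fin n) (Fin n) (ZMod 2))
    (hs : A.IsSymm) (hd : ∀ i, A i i = 0) (x : Fin n → ZMod 2) :
    ∑ j, ∑ k, x j * A j k * x k = 0 := by
  rw [← Finset.sum_product']
  refine Finset.sum_involution (fun p _ => (p.2, p.1)) ?_ ?_ ?_ ?_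
  · intro p _
    have hAs : A p.2 p.1 = A p.1 p.2 := by
      conv_lhs => rw [← hs]
      rfl
    have : x p.1 * A p.1 p.2 * x p.2 = x p.2 * A p.2 p.1 * x p.1 := by
      rw [hAs]; ring
    rw [← this]
    have h2 : (2 : ZMod 2) = 0 := by decide
    calc x p.1 * A p.1 p.2 * x p.2 + x p.1 * A p.1 p.2 * x p.2
        = 2 * (x p.1 * A p.1 p.2 * x p.2) := by ring
      _ = 0 := by rw [h2, zero_mul]
  · intro p _ hf
    intro hcon
    apply hf
    have : p.2 = p.1 := congrArg Prod.fst hcon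
    rw [this, hd p.1, mul_zero, zero_mul]
  · intro p hp; simp
  · intro p _; rfl

/-- Over `ZMod 2`, for a symmetric matrix with zero diagonal,
`adjugate A i i * det A = 0`. -/
lemma adj_diag_mul_det {n : ℕ} (A : Matrix (Fin n) (Fin n) (ZMod 2))
    (hs : A.IsSymm) (hd : ∀ i, A i i = 0) (i : Fin n) :
    A.adjugate i i * A.det = 0 := by
  by_cases h : IsUnit A.det
  · have hinv : A * A⁻¹ = 1 := Matrix.mul_nonsing_inv A h
    have hx : A⁻¹ i i = ∑ j, ∑ k, (A⁻¹ j i) * A j k * (A⁻¹ k i) := by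
      have : ∀ j, ∑ k, (A⁻¹ j i) * A j k * (A⁻¹ k i)
          = A⁻¹ j i * (A * A⁻¹) j i := by
        intro j
        rw [Matrix.mul_apply, Finset.mul_sum]
        exact Finset.sum_congr rfl fun k _ => by ring
      rw [Finset.sum_congr rfl fun j _ => this j]
      rw [hinv]
      simp [Matrix.one_apply]
    have hzero : A⁻¹ i i = 0 := by
      rw [hx]; exact quad_zero A hs hd _
    have hadj : A⁻¹ i i = Ring.inverse A.det * A.adjugate i i := by
      rw [Matrix.inv_def]; rfl
    have : A.adjugate i i = 0 := by
      have h1 : A.det * (Ring.inverse A.det * A.adjugate i i) = 0 := by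
        rw [← hadj, hzero, mul_zero]
      rwa [← mul_assoc, Ring.mul_inverse_cancel _ h, one_mul] at h1
    rw [this, zero_mul]
  · have : A.det = 0 := by
      by_contra hne
      exact h (isUnit_iff_ne_zero.mpr hne)
    rw [this, mul_zero]

/-- For an integer symmetric matrix with even diagonal,
`adjugate M i i * det M` is even. -/
lemma even_adj_diag_mul_det {n : ℕ} (M : Matrix (Fin n) (Fin n) ℤ)
    (hs : M.IsSymm) (hd : ∀ i, Even (M i i)) (i : Fin n) :
    Even (M.adjugate i i * M.det) := by
  set f := Int.castRingHom (ZMod 2) with hf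
  set A := f.mapMatrix M with hA
  have hAs : A.IsSymm := hs.map f
  have hAd : ∀ j, A j j = 0 := by
    intro j
    obtain ⟨c, hc⟩ := hd j
    have : ((M j j : ℤ) : ZMod 2) = 0 :=
      (ZMod.intCast_zmod_eq_zero_iff_dvd _ 2).mpr ⟨c, by omega⟩
    simpa [hA] using this
  have key := adj_diag_mul_det A hAs hAd i
  have hcast : ((M.adjugate i i * M.det : ℤ) : ZMod 2) = 0 := by
    rw [Int.cast_mul]
    have h1 : ((M.adjugate i i : ℤ) : ZMod 2) = A.adjugate i i := by
      rw [hA, ← RingHom.map_adjugate]; rfl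
    have h2 : ((M.det : ℤ) : ZMod 2) = A.det := by
      rw [hA, ← RingHom.map_det]; rfl
    rw [h1, h2]; exact key
  obtain ⟨c, hc⟩ := (ZMod.intCast_zmod_eq_zero_iff_dvd _ 2).mp hcast
  exact ⟨c, by omega⟩

/-- Let `G` be the Gram matrix of an even lattice (so `G` is a
symmetric integer matrix with even diagonal and nonzero determinant, viewed
over `ℚ`) and let `R` be a subring of `ℚ`.  Then all entries of `G⁻¹` lie in
`R` and all diagonal entries of `G⁻¹` lie in `2R` if and only if `det G` is
invertible in `R`. -/
theorem stmt2 (l : ℕ) (G : Matrix (Fin l) (Fin l) ℚ)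
    (hint : ∀ i j, ∃ m : ℤ, G i j = (m : ℚ))
    (hsymm : G.IsSymm)
    (heven : ∀ i, ∃ m : ℤ, G i i = 2 * (m : ℚ))
    (hdet : G.det ≠ 0)
    (R : Subring ℚ) :
    ((∀ i j, G⁻¹ i j ∈ R) ∧ (∀ i, ∃ r ∈ R, G⁻¹ i i = 2 * r)) ↔
      (∃ r ∈ R, G.det * r = 1) := by
  -- the underlying integer matrix
  set f := Int.castRingHom ℚ with hf
  set M : Matrix (Fin l) (Fin l) ℤ := fun i j => (hint i j).choose with hM
  have hMG : ∀ i j, G i j = (M i j : ℚ) := fun i j => (hint i j).choose_spec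
  have hGM : G = f.mapMatrix M := by
    ext i j
    exact hMG i j
  have hMs : M.IsSymm := by
    rw [Matrix.IsSymm]
    ext i j
    have h1 : G j i = G i j := by
      conv_lhs => rw [← hsymm]
      rfl
    rw [hMG j i, hMG i j] at h1
    exact_mod_cast h1
  have hMe : ∀ i, Even (M i i) := by
    intro i
    obtain ⟨m, hm⟩ := heven i
    rw [hMG i i] at hm
    have : M i i = 2 * m := by exact_mod_cast hm
    exact ⟨m, by omega⟩
  have hdetM : ((M.det : ℤ) : ℚ) = G.det := by
    rw [hGM, ← RingHom.map_det]; rfl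
  have hadjM : ∀ i j, ((M.adjugate i j : ℤ) : ℚ) = G.adjugate i j := by
    intro i j
    rw [hGM, ← RingHom.map_adjugate]; rfl
  constructor
  · rintro ⟨h1, _⟩
    -- inverse matrix with entries in R
    set N : Matrix (Fin l) (Fin l) R := fun i j => ⟨G⁻¹ i j, h1 i j⟩ with hN
    have hNmap : R.subtype.mapMatrix N = G⁻¹ := by
      ext i j; rfl
    refine ⟨G⁻¹.det, ?_, ?_⟩
    · have : (R.subtype N.det : ℚ) = G⁻¹.det := by
        rw [RingHom.map_det, hNmap]
      rw [← this]
      exact SetLike.coe_mem _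
    · rw [Matrix.det_nonsing_inv, Ring.inverse_eq_inv]
      exact mul_inv_cancel₀ hdet
  · rintro ⟨r, hr, hdr⟩
    have hrinv : r = (G.det)⁻¹ := by
      field_simp
      linarith [hdr]
    have hGinv : ∀ i j, G⁻¹ i j = r * (M.adjugate i j : ℚ) := by
      intro i j
      rw [Matrix.inv_def, Ring.inverse_eq_inv, hadjM i j, ← hrinv]
      rfl
    constructor
    · intro i j
      rw [hGinv i j]
      exact mul_mem hr (intCast_mem R _)
    · intro i
      obtain ⟨k, hk⟩ := even_adj_diag_mul_det M hMs hMe i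
      have hk2 : M.adjugate i i * M.det = 2 * k := by omega
      refine ⟨(k : ℚ) * r * r, mul_mem (mul_mem (intCast_mem R _) hr) hr, ?_⟩
      have hq : ((M.adjugate i i : ℤ) : ℚ) * ((M.det : ℤ) : ℚ) = 2 * (k : ℚ) := by
        exact_mod_cast congrArg (Int.cast : ℤ → ℚ) hk2
      calc G⁻¹ i i = r * (M.adjugate i i : ℚ) := hGinv i i
        _ = r * (M.adjugate i i : ℚ) * (G.det * r) := by rw [hdr, mul_one]
        _ = ((M.adjugate i i : ℤ) : ℚ) * ((M.det : ℤ) : ℚ) * (r * r) := by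
            rw [hdetM]; ring
        _ = 2 * ((k : ℚ) * r * r) := by rw [hq]; ring
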